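/- arXiv:2506.02815 — 2 statements merged into one kernel-verified Lean document; each statement's English description precedes it below -/
import Mathlib

section
/- Let A be a real symmetric positive definite N×N matrix, let Φ be a real N×n matrix with linearly independent columns, and set K = ΦᵀAΦ. For any f ∈ ℝᴺ, the BFEM posterior mean m⋆ = Φ K⁻¹ Φᵀ f is the unique vector w in the column space of Φ satisfying the Galerkin equations Φᵀ A w = Φᵀ f. In other words, the BFEM posterior mean coincides with the standard FEM (Galerkin) solution. -/
open Matrix

/-- With `A` symmetric positive definite, `Φ` of full column rank
and `K = ΦᵀAΦ`, for any `f` the BFEM posterior mean `m⋆ = Φ K⁻¹ Φᵀ f` lies in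
the column space of `Φ`, satisfies the Galerkin equations `Φᵀ A m⋆ = Φᵀ f`,
and is the unique such vector: it coincides with the standard FEM (Galerkin)
solution. -/
theorem bfem_posterior_mean_is_galerkin
    (N n : ℕ)
    (A : Matrix (Fin N) (Fin N) ℝ) (hAsymm : A.IsSymm) (hApd : A.PosDef)
    (Φ : Matrix (Fin N) (Fin n) ℝ) (hΦ : Function.Injective Φ.mulVec)
    (K : Matrix (Fin n) (Fin n) ℝ) (hK : K = Φᵀ * A * Φ)
    (f : Fin N → ℝ)
    (m : Fin N → ℝ) (hm : m = (Φ * K⁻¹ * Φᵀ) *ᵥ f) :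
    (∃ c : Fin n → ℝ, m = Φ *ᵥ c) ∧
      Φᵀ *ᵥ (A *ᵥ m) = Φᵀ *ᵥ f ∧
      ∀ w : Fin N → ℝ, (∃ c : Fin n → ℝ, w = Φ *ᵥ c) →
        Φᵀ *ᵥ (A *ᵥ w) = Φᵀ *ᵥ f → w = m := by
  have hKpd : K.PosDef := by
    refine Matrix.PosDef.of_dotProduct_mulVec_pos ?_ ?_
    · rw [hK]
      have : Φᵀ = Φᴴ := by ext i j; simp [conjTranspose]
      rw [this]
      exact isHermitian_conjTranspose_mul_mul Φ hApd.1
    · intro x hx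
      have hΦx : Φ *ᵥ x ≠ 0 := by
        intro h
        exact hx (hΦ (by simpa using h))
      have hpos := hApd.dotProduct_mulVec_pos (x := Φ *ᵥ x) hΦx
      have hgoal : star x ⬝ᵥ K *ᵥ x = (Φ *ᵥ x) ⬝ᵥ (A *ᵥ (Φ *ᵥ x)) := by
        rw [hK, ← mulVec_mulVec, ← mulVec_mulVec, star_trivial,
          dotProduct_mulVec, vecMul_transpose]
      rw [hgoal]
      simpa using hpos
  have hKunit : IsUnit K.det := hKpd.det_pos.ne'.isUnit
  have hKinv : K * K⁻¹ = 1 := mul_nonsing_inv K hKunit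
  have hKinv' : K⁻¹ * K = 1 := nonsing_inv_mul K hKunit
  have hmc : m = Φ *ᵥ (K⁻¹ *ᵥ (Φᵀ *ᵥ f)) := by
    rw [hm, ← mulVec_mulVec, ← mulVec_mulVec]
  refine ⟨⟨_, hmc⟩, ?_, ?_⟩
  · rw [hmc]
    have : Φᵀ *ᵥ (A *ᵥ (Φ *ᵥ (K⁻¹ *ᵥ (Φᵀ *ᵥ f))))
        = (Φᵀ * A * Φ * K⁻¹) *ᵥ (Φᵀ *ᵥ f) := by
      simp [mulVec_mulVec, Matrix.mul_assoc]
    rw [this, ← hK, hKinv, one_mulVec]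
  · rintro w ⟨c, rfl⟩ hw
    have hKc : K *ᵥ c = Φᵀ *ᵥ f := by
      rw [hK]
      simpa [mulVec_mulVec, Matrix.mul_assoc] using hw
    have : c = K⁻¹ *ᵥ (Φᵀ *ᵥ f) := by
      rw [← hKc, mulVec_mulVec, hKinv', one_mulVec]
    rw [hmc, this]
end

section
/- Let A be a real symmetric positive definite N×N matrix, let Φ be a real N×n matrix with linearly independent columns, set K = ΦᵀAΦ and S = A⁻¹ − Φ K⁻¹ Φᵀ. Then: (i) S·A·Φ = 0, so every vector in the column space of Φ lies in the kernel of SA; (ii) SA is idempotent, i.e., (SA)² = SA; and (iii) for every v ∈ ℝᴺ with ΦᵀA v = 0 one has SA v = v. Hence SA is the projection onto the A-orthogonal complement of the column space of Φ, and the BFEM posterior covariance carries uncertainty only in the space A-orthogonal to the FEM basis. -/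
open Matrix

/-- With `A` symmetric positive definite, `Φ` of full column rank,
`K = ΦᵀAΦ` and `S = A⁻¹ − Φ K⁻¹ Φᵀ`, one has (i) `S·A·Φ = 0`, (ii) `SA` is
idempotent, and (iii) `SA v = v` for any `v` that is `A`-orthogonal to the
column space of `Φ` (i.e. `ΦᵀA v = 0`).  Hence `SA` is the projection onto the
`A`-orthogonal complement of the FEM basis. -/
theorem bfem_covariance_projection
    (N n : ℕ)
    (A : Matrix (Fin N) (Fin N) ℝ) (hAsymm : A.IsSymm) (hApd : A.PosDef)
    (Φ : Matrix (Fin N) (Fin n) ℝ) (hΦ : Function.Injective Φ.mulVec)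
    (K : Matrix (Fin n) (Fin n) ℝ) (hK : K = Φᵀ * A * Φ)
    (S : Matrix (Fin N) (Fin N) ℝ) (hS : S = A⁻¹ - Φ * K⁻¹ * Φᵀ) :
    S * A * Φ = 0 ∧
      (S * A) * (S * A) = S * A ∧
      ∀ v : Fin N → ℝ, Φᵀ *ᵥ (A *ᵥ v) = 0 → (S * A) *ᵥ v = v := by
  have hA' : Aᵀ = A := hAsymm
  have hKpd : K.PosDef := by
    refine Matrix.PosDef.of_dotProduct_mulVec_pos ?_ ?_
    · show Kᴴ = K
      rw [hK]
      have : Kᵀ = K := by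
        rw [hK, Matrix.transpose_mul, Matrix.transpose_mul, Matrix.transpose_transpose,
          hA', Matrix.mul_assoc]
      simpa [hK] using this
    · intro x hx
      have hΦx : Φ *ᵥ x ≠ 0 := by
        intro h
        exact hx (hΦ (by simpa using h))
      have h2 := hApd.dotProduct_mulVec_pos hΦx
      have : star x ⬝ᵥ K *ᵥ x = star (Φ *ᵥ x) ⬝ᵥ A *ᵥ (Φ *ᵥ x) := by
        simp only [hK, star_trivial, Matrix.mul_assoc, ← Matrix.mulVec_mulVec]
        rw [Matrix.dotProduct_mulVec x, Matrix.vecMul_transpose]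
      rw [this]
      exact h2
  have hKdet : IsUnit K.det := hKpd.det_pos.ne'.isUnit
  have hKinv : K⁻¹ * K = 1 := Matrix.nonsing_inv_mul K hKdet
  have hAinv : A⁻¹ * A = 1 := Matrix.nonsing_inv_mul A hApd.det_pos.ne'.isUnit
  have hSA : S * A = 1 - Φ * K⁻¹ * Φᵀ * A := by
    rw [hS, Matrix.sub_mul, hAinv]
  have h1 : S * A * Φ = 0 := by
    rw [hSA, Matrix.sub_mul, Matrix.one_mul]
    have : Φ * K⁻¹ * Φᵀ * A * Φ = Φ := by
      rw [Matrix.mul_assoc (Φ * K⁻¹), Matrix.mul_assoc (Φ * K⁻¹), ← hK, Matrix.mul_assoc, hKinv, Matrix.mul_one]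
    rw [this, sub_self]
  refine ⟨h1, ?_, ?_⟩
  · set P := Φ * K⁻¹ * Φᵀ * A with hP
    have hPP : P * P = P := by
      simp only [hP, Matrix.mul_assoc]
      rw [show Φᵀ * (A * (Φ * (K⁻¹ * (Φᵀ * A)))) = K * (K⁻¹ * (Φᵀ * A)) from by
        rw [hK]; simp [Matrix.mul_assoc]]
      rw [← Matrix.mul_assoc K⁻¹, hKinv, Matrix.one_mul]
    rw [hSA, Matrix.sub_mul, Matrix.one_mul, Matrix.mul_sub, Matrix.mul_one, hPP]
    abel
  · intro v hv
    rw [hSA, Matrix.sub_mulVec, Matrix.one_mulVec]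
    have : (Φ * K⁻¹ * Φᵀ * A) *ᵥ v = 0 := by
      have : (Φ * K⁻¹ * Φᵀ * A) *ᵥ v = (Φ * K⁻¹) *ᵥ (Φᵀ *ᵥ (A *ᵥ v)) := by
        simp [← Matrix.mulVec_mulVec, Matrix.mul_assoc]
      rw [this, hv]
      simp
    rw [this, sub_zero]
end
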